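/- (Representation formula.) For every s ∈ ℝ and every φ ∈ C_s, the unique continuous solution y : [s−τ_N, +∞) → ℂ^d of the difference-delay system satisfies, for all t ≥ s: y(t) = − Σ_{j=1}^N ∫_{[s, s+τ_j)} d_α X(t,α) D_j(α) φ(α − τ_j − s), where for each fixed t the integrals are Lebesgue–Stieltjes integrals over [s, s+τ_j) against the matrix-valued measure associated with the restriction of the function α ↦ X(t,α) (which is locally of bounded variation) to [s, s+τ_j). -/

import Mathlib

open MeasureTheory Set
open scoped ENNReal NNReal
open scoped Matrix.Norms.L2Operator

noncomputable section

-- The Lebesgue–Stieltjes measure of a monotone function (zero if not monotone).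
open scoped Classical in
noncomputable def monoMeasure (m : ℝ → ℝ) : Measure ℝ :=
  if h : Monotone m then h.stieltjesFunction.measure else 0

/-- The function `f` clamped to the interval `[c,e]`. -/
def clampOn (f : ℝ → ℝ) (c e : ℝ) : ℝ → ℝ := fun x => f (max c (min x e))

/-- Cumulative total variation of the clamped function. -/
def varFun (f : ℝ → ℝ) (c e : ℝ) : ℝ → ℝ :=
  fun x => (eVariationOn (clampOn f c e) (Icc c x)).toReal

/-- Positive (Jordan) part. -/
def posPartFun (f : ℝ → ℝ) (c e : ℝ) : ℝ → ℝ :=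
  fun x => (varFun f c e x + clampOn f c e x - f c) / 2

/-- Negative (Jordan) part. -/
def negPartFun (f : ℝ → ℝ) (c e : ℝ) : ℝ → ℝ :=
  fun x => (varFun f c e x - clampOn f c e x + f c) / 2

/-- Lebesgue–Stieltjes integral of `φ` against (the measure associated with the
restriction to `[c,e)` of) the function `f`, over `[c,e)`. -/
def lsIntIcoR (f : ℝ → ℝ) (c e : ℝ) (φ : ℝ → ℝ) : ℝ :=
  (∫ x in Ico c e, φ x ∂(monoMeasure (posPartFun f c e))) -
  (∫ x in Ico c e, φ x ∂(monoMeasure (negPartFun f c e)))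

/-- Same, over the open interval `(c,e)`. -/
def lsIntIooR (f : ℝ → ℝ) (c e : ℝ) (φ : ℝ → ℝ) : ℝ :=
  (∫ x in Ioo c e, φ x ∂(monoMeasure (posPartFun f c e))) -
  (∫ x in Ioo c e, φ x ∂(monoMeasure (negPartFun f c e)))

/-- Complex Lebesgue–Stieltjes integral `∫_{[c,e)} φ df`. -/
def lsIntIcoC (f : ℝ → ℂ) (c e : ℝ) (φ : ℝ → ℂ) : ℂ :=
  (lsIntIcoR (fun x => (f x).re) c e (fun x => (φ x).re)
    - lsIntIcoR (fun x => (f x).im) c e (fun x => (φ x).im))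
  + Complex.I * (lsIntIcoR (fun x => (f x).re) c e (fun x => (φ x).im)
    + lsIntIcoR (fun x => (f x).im) c e (fun x => (φ x).re))

def lsIntIooC (f : ℝ → ℂ) (c e : ℝ) (φ : ℝ → ℂ) : ℂ :=
  (lsIntIooR (fun x => (f x).re) c e (fun x => (φ x).re)
    - lsIntIooR (fun x => (f x).im) c e (fun x => (φ x).im))
  + Complex.I * (lsIntIooR (fun x => (f x).re) c e (fun x => (φ x).im)
    + lsIntIooR (fun x => (f x).im) c e (fun x => (φ x).re))

/-- `∫_{[c,e)} dF(τ) G(τ)` for matrix-valued `F` (the integrator) and `G`. -/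
def lsIntIcoMM {d : ℕ} (F : ℝ → Matrix (Fin d) (Fin d) ℂ) (c e : ℝ)
    (G : ℝ → Matrix (Fin d) (Fin d) ℂ) : Matrix (Fin d) (Fin d) ℂ :=
  Matrix.of fun i k => ∑ j, lsIntIcoC (fun τ => F τ i j) c e (fun τ => G τ j k)

/-- `∫_{[c,e)} dF(τ) g(τ)` for matrix-valued `F` and vector-valued `g`. -/
def lsIntIcoMV {d : ℕ} (F : ℝ → Matrix (Fin d) (Fin d) ℂ) (c e : ℝ)
    (g : ℝ → Fin d → ℂ) : Fin d → ℂ :=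
  fun i => ∑ j, lsIntIcoC (fun τ => F τ i j) c e (fun τ => g τ j)

def lsIntIooMV {d : ℕ} (F : ℝ → Matrix (Fin d) (Fin d) ℂ) (c e : ℝ)
    (g : ℝ → Fin d → ℂ) : Fin d → ℂ :=
  fun i => ∑ j, lsIntIooC (fun τ => F τ i j) c e (fun τ => g τ j)

instance matrixMeasurableSpace {d : ℕ} : MeasurableSpace (Matrix (Fin d) (Fin d) ℂ) :=
  inferInstanceAs (MeasurableSpace (Fin d → Fin d → ℂ))

/-- A Stieltjes–Volterra kernel of type `B^∞` on `[a,b] × [a,b]`. -/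
def IsSVKernel (d : ℕ) (a b : ℝ) (κ : ℝ → ℝ → Matrix (Fin d) (Fin d) ℂ) : Prop :=
  Measurable ((Icc a b ×ˢ Icc a b).restrict (fun p : ℝ × ℝ => κ p.1 p.2)) ∧
  (∀ t ∈ Icc a b, ∀ τ ∈ Icc a b, t ≤ τ → κ t τ = 0) ∧
  (∀ t ∈ Icc a b, ∀ x ∈ Icc a b, ContinuousWithinAt (κ t) (Icc a b ∩ Iio x) x) ∧
  (∃ C : ℝ, ∀ t ∈ Icc a b, eVariationOn (κ t) (Icc a b) ≤ ENNReal.ofReal C) ∧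
  (∀ ε > (0:ℝ), ∃ η > (0:ℝ), ∀ t ∈ Icc a b, ∀ τ ∈ Icc a b, 0 < t - τ → t - τ < η →
      eVariationOn (κ t) (Ico τ t) < ENNReal.ofReal ε)

/-- The norm `‖κ‖_{[a,b]} = sup_t ‖κ(t,·)‖_{BV([a,b])}` (base point `b`). -/
def KNorm (d : ℕ) (a b : ℝ) (κ : ℝ → ℝ → Matrix (Fin d) (Fin d) ℂ) : ℝ≥0∞ :=
  ⨆ t ∈ Icc a b, eVariationOn (κ t) (Icc a b)

/-- `ρ` is a resolvent of the kernel `κ`. -/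
def IsResolvent (d : ℕ) (a b : ℝ) (κ ρ : ℝ → ℝ → Matrix (Fin d) (Fin d) ℂ) : Prop :=
  IsSVKernel d a b ρ ∧
  ∀ t ∈ Icc a b, ∀ β ∈ Icc a b,
    ρ t β = -κ t β + lsIntIcoMM (κ t) β t (fun τ => ρ τ β)

open Filter Topology Function

section StieltjesHelpers

lemma monoMeasure_eq {m : ℝ → ℝ} (h : Monotone m) :
    monoMeasure m = h.stieltjesFunction.measure := by
  rw [monoMeasure, dif_pos h]

lemma rightLim_add {m n : ℝ → ℝ} (hm : Monotone m) (hn : Monotone n) (x : ℝ) :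
    rightLim (fun y => m y + n y) x = rightLim m x + rightLim n x :=
  rightLim_eq_of_tendsto
    ((hm.tendsto_rightLim x).add (hn.tendsto_rightLim x))

lemma monoMeasure_add {m n : ℝ → ℝ} (hm : Monotone m) (hn : Monotone n) :
    monoMeasure (fun x => m x + n x) = monoMeasure m + monoMeasure n := by
  have hmn : Monotone fun x => m x + n x := hm.add hn
  rw [monoMeasure_eq hm, monoMeasure_eq hn, monoMeasure_eq hmn]
  refine Measure.ext_of_Ioc _ _ fun a b hab => ?_
  rw [Measure.add_apply, StieltjesFunction.measure_Ioc, StieltjesFunction.measure_Ioc,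
    StieltjesFunction.measure_Ioc]
  have ha := rightLim_add hm hn a
  have hb := rightLim_add hm hn b
  rw [Monotone.stieltjesFunction_eq, Monotone.stieltjesFunction_eq,
    Monotone.stieltjesFunction_eq, Monotone.stieltjesFunction_eq,
    Monotone.stieltjesFunction_eq, Monotone.stieltjesFunction_eq, ha, hb]
  have h1 : rightLim m a ≤ rightLim m b := hm.rightLim hab.le
  have h2 : rightLim n a ≤ rightLim n b := hn.rightLim hab.le
  rw [show rightLim m b + rightLim n b - (rightLim m a + rightLim n a)
      = (rightLim m b - rightLim m a) + (rightLim n b - rightLim n a) by ring,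
    ENNReal.ofReal_add (by linarith) (by linarith)]

/-- the basic jump function -/
def stepR (r p : ℝ) : ℝ → ℝ := fun x => if p < x then r else 0

lemma stepR_mono {r p : ℝ} (hr : 0 ≤ r) : Monotone (stepR r p) := by
  intro x y hxy
  unfold stepR
  split_ifs with h1 h2 h2
  · exact le_refl r
  · exact absurd (h1.trans_le hxy) h2
  · exact hr
  · exact le_refl 0

lemma rightLim_stepR (r p x : ℝ) :
    rightLim (stepR r p) x = if p ≤ x then r else 0 := by
  apply rightLim_eq_of_tendsto
  by_cases h : p ≤ x
  · rw [if_pos h]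
    apply Tendsto.congr' _ tendsto_const_nhds
    filter_upwards [self_mem_nhdsWithin] with y hy
    simp only [stepR, if_pos (h.trans_lt hy)]
  · rw [if_neg h]
    push_neg at h
    apply Tendsto.congr' _ tendsto_const_nhds
    filter_upwards [Ioo_mem_nhdsGT_of_mem ⟨le_refl x, h⟩] with y hy
    simp only [stepR, if_neg (not_lt.2 hy.2.le)]

lemma monoMeasure_stepR {r : ℝ} (p : ℝ) (hr : 0 ≤ r) :
    monoMeasure (stepR r p) = ENNReal.ofReal r • Measure.dirac p := by
  rw [monoMeasure_eq (stepR_mono hr)]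
  refine Measure.ext_of_Ioc _ _ fun a b hab => ?_
  rw [StieltjesFunction.measure_Ioc, Monotone.stieltjesFunction_eq,
    Monotone.stieltjesFunction_eq, rightLim_stepR, rightLim_stepR,
    Measure.smul_apply, Measure.dirac_apply' _ measurableSet_Ioc]
  by_cases hb : p ≤ b
  · by_cases ha : p ≤ a
    · simp [indicator, not_lt.2 ha, hr, ha, hb]
    · push_neg at ha
      simp only [if_pos hb, if_neg (not_le.2 ha), sub_zero]
      rw [indicator_of_mem (show p ∈ Ioc a b from ⟨ha, hb⟩)]
      simp [ENNReal.ofReal]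
  · have ha : ¬ p ≤ a := fun h => hb (h.trans hab.le)
    simp only [if_neg hb, if_neg ha, sub_zero]
    rw [indicator_of_notMem (fun h => hb h.2)]
    simp

lemma monoMeasure_const (K : ℝ) : monoMeasure (fun _ => K) = 0 := by
  rw [monoMeasure_eq monotone_const]
  refine Measure.ext_of_Ioc _ _ fun a b hab => ?_
  rw [StieltjesFunction.measure_Ioc, Monotone.stieltjesFunction_eq,
    Monotone.stieltjesFunction_eq]
  have : rightLim (fun _ : ℝ => K) = fun _ => K := by
    funext x
    exact rightLim_eq_of_tendsto tendsto_const_nhds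
  simp [this]

lemma monotone_finsum {ι : Type*} (K : Finset ι) (m : ι → ℝ → ℝ)
    (hm : ∀ i ∈ K, Monotone (m i)) : Monotone (fun x => ∑ i ∈ K, m i x) :=
  fun _ _ hxy => Finset.sum_le_sum fun i hi => hm i hi hxy

lemma monoMeasure_sum {ι : Type*} (K : Finset ι) (m : ι → ℝ → ℝ)
    (hm : ∀ i ∈ K, Monotone (m i)) :
    monoMeasure (fun x => ∑ i ∈ K, m i x) = ∑ i ∈ K, monoMeasure (m i) := by
  classical
  induction K using Finset.induction_on with
  | empty => simpa using monoMeasure_const 0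
  | @insert a K' hnot ih =>
    have h1 : Monotone (m a) := hm a (Finset.mem_insert_self a K')
    have h2 : Monotone (fun x => ∑ i ∈ K', m i x) :=
      monotone_finsum K' m (fun i hi => hm i (Finset.mem_insert_of_mem hi))
    have : (fun x => ∑ i ∈ insert a K', m i x)
        = fun x => m a x + ∑ i ∈ K', m i x := by
      funext x; rw [Finset.sum_insert hnot]
    rw [this, monoMeasure_add h1 h2, ih (fun i hi => hm i (Finset.mem_insert_of_mem hi)),
      Finset.sum_insert hnot]

lemma evar_neg (F : ℝ → ℝ) (S : Set ℝ) :
    eVariationOn (fun x => -(F x)) S = eVariationOn F S := by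
  unfold eVariationOn
  congr 1
  funext p
  congr 1
  funext i
  rw [edist_neg_neg]

lemma evar_add_le (F G : ℝ → ℝ) (S : Set ℝ) :
    eVariationOn (fun x => F x + G x) S ≤ eVariationOn F S + eVariationOn G S := by
  apply iSup_le
  rintro ⟨n, ⟨u, hu, us⟩⟩
  calc ∑ i ∈ Finset.range n, edist (F (u (i+1)) + G (u (i+1))) (F (u i) + G (u i))
      ≤ ∑ i ∈ Finset.range n, (edist (F (u (i+1))) (F (u i)) + edist (G (u (i+1))) (G (u i))) :=
        Finset.sum_le_sum fun i _ => edist_add_add_le _ _ _ _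
    _ = (∑ i ∈ Finset.range n, edist (F (u (i+1))) (F (u i)))
        + ∑ i ∈ Finset.range n, edist (G (u (i+1))) (G (u i)) := Finset.sum_add_distrib
    _ ≤ _ := add_le_add
        (le_iSup_of_le ⟨n, ⟨u, hu, us⟩⟩ le_rfl) (le_iSup_of_le ⟨n, ⟨u, hu, us⟩⟩ le_rfl)

lemma stepR_abs_le (r p x : ℝ) : |stepR r p x| ≤ |r| := by
  unfold stepR; split_ifs <;> simp [abs_nonneg]

lemma evar_mono_le_of_bounds {F : ℝ → ℝ} (hF : Monotone F) {l u : ℝ}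
    (hl : ∀ x, l ≤ F x) (hu : ∀ x, F x ≤ u) (c x : ℝ) :
    eVariationOn F (Icc c x) ≤ ENNReal.ofReal (u - l) := by
  rcases le_or_gt c x with hcx | hcx
  · have := (hF.monotoneOn (Icc c x)).eVariationOn_le
      (left_mem_Icc.2 hcx) (right_mem_Icc.2 hcx)
    rw [Set.inter_self] at this
    exact this.trans (ENNReal.ofReal_le_ofReal (by linarith [hl c, hu x]))
  · rw [eVariationOn.subsingleton _ (Set.subsingleton_empty.anti
      (by rw [Icc_eq_empty (not_le.2 hcx)]))]
    exact zero_le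

lemma evar_stepR_le (r p c x : ℝ) :
    eVariationOn (stepR r p) (Icc c x) ≤ ENNReal.ofReal |r| := by
  rcases le_or_gt 0 r with hr | hr
  · have := evar_mono_le_of_bounds (F := stepR r p) (by
      intro a b hab
      unfold stepR
      split_ifs with h1 h2 h2
      · exact le_refl r
      · exact absurd (h1.trans_le hab) h2
      · exact hr
      · exact le_refl 0) (l := 0) (u := r)
      (fun y => by unfold stepR; split_ifs <;> simp [hr])
      (fun y => by unfold stepR; split_ifs <;> simp [hr]) c x
    simpa [abs_of_nonneg hr] using this
  · have hrw : stepR r p = fun y => -(stepR (-r) p y) := by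
      funext y; unfold stepR; split_ifs <;> ring
    rw [hrw, evar_neg]
    have := evar_mono_le_of_bounds (F := stepR (-r) p) (by
      intro a b hab
      unfold stepR
      split_ifs with h1 h2 h2
      · exact le_refl _
      · exact absurd (h1.trans_le hab) h2
      · linarith
      · exact le_refl 0) (l := 0) (u := -r)
      (fun y => by unfold stepR; split_ifs <;> [linarith; exact le_refl 0])
      (fun y => by unfold stepR; split_ifs <;> simp <;> linarith) c x
    simpa [abs_of_neg hr] using this

lemma evar_const_add_finsum_le {ι : Type*} (K : Finset ι) (F : ι → ℝ → ℝ) (b : ℝ) (S : Set ℝ) :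
    eVariationOn (fun x => b + ∑ i ∈ K, F i x) S ≤ ∑ i ∈ K, eVariationOn (F i) S := by
  classical
  induction K using Finset.induction_on with
  | empty =>
    simp only [Finset.sum_empty, add_zero]
    have h0 : eVariationOn (fun _ : ℝ => b) S = 0 :=
      eVariationOn.constant_on (by rintro z ⟨x, _, rfl⟩ w ⟨y, _, rfl⟩; rfl)
    simp [h0]
  | @insert a K' hnot ih =>
    have : (fun x => b + ∑ i ∈ insert a K', F i x)
        = fun x => F a x + (b + ∑ i ∈ K', F i x) := by
      funext x; rw [Finset.sum_insert hnot]; ring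
    rw [this, Finset.sum_insert hnot]
    exact (evar_add_le _ _ _).trans (add_le_add le_rfl ih)

lemma restrict_finsum {ι : Type*} (K : Finset ι) (μ : ι → Measure ℝ) (S : Set ℝ) :
    (∑ i ∈ K, μ i).restrict S = ∑ i ∈ K, (μ i).restrict S := by
  classical
  induction K using Finset.induction_on with
  | empty => simp
  | @insert a K' hnot ih =>
    rw [Finset.sum_insert hnot, Finset.sum_insert hnot, Measure.restrict_add, ih]

lemma integrable_restrict_of_bound {c e : ℝ} (μ : Measure ℝ)
    (hfin : μ (Ico c e) ≠ ⊤) {φ : ℝ → ℝ} (hφ : ContinuousOn φ (Icc c e)) :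
    Integrable φ (μ.restrict (Ico c e)) := by
  haveI : IsFiniteMeasure (μ.restrict (Ico c e)) :=
    ⟨by rwa [Measure.restrict_apply_univ, lt_top_iff_ne_top]⟩
  obtain ⟨C, hC⟩ := isCompact_Icc.exists_bound_of_continuousOn hφ
  refine ⟨(hφ.mono Ico_subset_Icc_self).aestronglyMeasurable measurableSet_Ico,
    HasFiniteIntegral.of_bounded (C := C) ?_⟩
  exact (ae_restrict_iff' measurableSet_Ico).2
    (ae_of_all _ fun x hx => hC x (Ico_subset_Icc_self hx))

lemma max_sub_max (r : ℝ) : max (-r) 0 - max r 0 = -r := by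
  rcases le_total 0 r with h | h
  · rw [max_eq_right (neg_nonpos.2 h), max_eq_left h]; ring
  · rw [max_eq_left (neg_nonneg.2 h), max_eq_right h]; ring

theorem lsIntIcoR_eval {n : ℕ} {c e : ℝ} (hce : c < e) (p : Fin n → ℝ) (a : Fin n → ℝ) (b : ℝ)
    (hp : ∀ i, p i ∈ Ico c e) (f φ : ℝ → ℝ)
    (hf : ∀ x ∈ Icc c e, f x = b + ∑ i, a i * (if x ≤ p i then 1 else 0))
    (hφ : ContinuousOn φ (Icc c e)) :
    lsIntIcoR f c e φ = ∑ i, (-(a i)) * φ (p i) := by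
  classical
  -- clamp facts
  have hclampmem : ∀ x : ℝ, max c (min x e) ∈ Icc c e :=
    fun x => ⟨le_max_left _ _, max_le hce.le (min_le_right _ _)⟩
  have hiff : ∀ (i : Fin n) (x : ℝ), (max c (min x e) ≤ p i ↔ x ≤ p i) := by
    intro i x
    constructor
    · intro h
      rcases le_total x e with hxe | hxe
      · calc x = min x e := (min_eq_left hxe).symm
          _ ≤ max c (min x e) := le_max_right _ _
          _ ≤ p i := h
      · exfalso
        have : min x e = e := min_eq_right hxe
        have : e ≤ p i := by
          calc e = min x e := (min_eq_right hxe).symm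
            _ ≤ max c (min x e) := le_max_right _ _
            _ ≤ p i := h
        exact absurd (hp i).2 (not_lt.2 this)
    · intro h
      exact max_le (hp i).1 ((min_le_left _ _).trans h)
  have hg : ∀ x : ℝ, clampOn f c e x = b + ∑ i, a i * (if x ≤ p i then 1 else 0) := by
    intro x
    rw [clampOn, hf _ (hclampmem x)]
    congr 1
    refine Finset.sum_congr rfl fun i _ => ?_
    by_cases h : x ≤ p i
    · rw [if_pos h, if_pos ((hiff i x).2 h)]
    · rw [if_neg h, if_neg (fun h' => h ((hiff i x).1 h'))]
  have hfc : f c = b + ∑ i, a i := by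
    rw [hf c ⟨le_refl c, hce.le⟩]
    congr 1
    exact Finset.sum_congr rfl fun i _ => by rw [if_pos (hp i).1, mul_one]
  have hg' : ∀ x : ℝ, clampOn f c e x = f c + ∑ i, stepR (-(a i)) (p i) x := by
    intro x
    rw [hg x, hfc]
    have hterm : ∀ i : Fin n,
        a i * (if x ≤ p i then (1:ℝ) else 0) = a i + stepR (-(a i)) (p i) x := by
      intro i
      unfold stepR
      by_cases h : x ≤ p i
      · rw [if_pos h, if_neg (not_lt.2 h)]; ring
      · rw [if_neg h, if_pos (not_le.1 h)]; ring
    rw [Finset.sum_congr rfl fun i _ => hterm i, Finset.sum_add_distrib]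
    ring
  have hgfun : clampOn f c e = fun x => f c + ∑ i, stepR (-(a i)) (p i) x := funext hg'
  -- variation finiteness
  have hVle : ∀ x : ℝ, eVariationOn (clampOn f c e) (Icc c x)
      ≤ ∑ i, ENNReal.ofReal |(-(a i))| := by
    intro x
    rw [hgfun]
    exact (evar_const_add_finsum_le Finset.univ _ (f c) _).trans
      (Finset.sum_le_sum fun i _ => evar_stepR_le _ _ _ _)
  have hVfin : ∀ x : ℝ, eVariationOn (clampOn f c e) (Icc c x) ≠ ⊤ :=
    fun x => ne_top_of_le_ne_top (ENNReal.sum_lt_top.2 fun i _ => ENNReal.ofReal_lt_top).ne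
      (hVle x)
  -- variation increments
  have hVdiff : ∀ x1 x2 : ℝ, c ≤ x1 → x1 ≤ x2 →
      |clampOn f c e x2 - clampOn f c e x1| ≤ varFun f c e x2 - varFun f c e x1 := by
    intro x1 x2 hcx1 hx12
    have hIcc := eVariationOn.Icc_add_Icc (clampOn f c e) (s := univ) hcx1 hx12 (mem_univ x1)
    simp only [Set.univ_inter] at hIcc
    have hB : edist (clampOn f c e x2) (clampOn f c e x1)
        ≤ eVariationOn (clampOn f c e) (Icc x1 x2) :=
      eVariationOn.edist_le _ ⟨hx12, le_refl x2⟩ ⟨le_refl x1, hx12⟩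
    have hBfin : eVariationOn (clampOn f c e) (Icc x1 x2) ≠ ⊤ :=
      fun h => hVfin x2 (by rw [← hIcc, h, add_top])
    have h2 : varFun f c e x2 = varFun f c e x1
        + (eVariationOn (clampOn f c e) (Icc x1 x2)).toReal := by
      rw [varFun, varFun, ← ENNReal.toReal_add (hVfin x1) hBfin, hIcc]
    rw [h2]
    have := ENNReal.toReal_mono hBfin hB
    rw [edist_dist, Real.dist_eq, ENNReal.toReal_ofReal (abs_nonneg _)] at this
    linarith
  have hgc : ∀ x : ℝ, x ≤ c → clampOn f c e x = f c := by
    intro x hx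
    rw [clampOn, min_eq_left (hx.trans hce.le), max_eq_left hx]
  have hVc : ∀ x : ℝ, x ≤ c → varFun f c e x = 0 := by
    intro x hx
    rw [varFun, eVariationOn.subsingleton, ENNReal.toReal_zero]
    intro y hy z hz
    have hyc : y = c := le_antisymm (hy.2.trans hx) hy.1
    have hzc : z = c := le_antisymm (hz.2.trans hx) hz.1
    rw [hyc, hzc]
  -- monotonicity of Jordan parts
  have main : ∀ x1 x2 : ℝ, c ≤ x1 → x1 ≤ x2 →
      posPartFun f c e x1 ≤ posPartFun f c e x2 ∧
      negPartFun f c e x1 ≤ negPartFun f c e x2 := by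
    intro x1 x2 h1 h2
    have hd := hVdiff x1 x2 h1 h2
    have habs1 := neg_abs_le (clampOn f c e x2 - clampOn f c e x1)
    have habs2 := le_abs_self (clampOn f c e x2 - clampOn f c e x1)
    constructor
    · simp only [posPartFun]; linarith
    · simp only [negPartFun]; linarith
  have heqc : ∀ x : ℝ, x ≤ c →
      posPartFun f c e x = posPartFun f c e c ∧
      negPartFun f c e x = negPartFun f c e c := by
    intro x hx
    rw [posPartFun, negPartFun, posPartFun, negPartFun, hVc x hx, hVc c (le_refl c),
      hgc x hx, hgc c (le_refl c)]
    exact ⟨rfl, rfl⟩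
  have hposneg : ∀ x1 x2 : ℝ, x1 ≤ x2 →
      posPartFun f c e x1 ≤ posPartFun f c e x2 ∧
      negPartFun f c e x1 ≤ negPartFun f c e x2 := by
    intro x1 x2 h12
    rcases le_or_gt x2 c with h2c | h2c
    · have e1 := heqc x1 (h12.trans h2c)
      have e2 := heqc x2 h2c
      rw [e1.1, e1.2, e2.1, e2.2]
      exact ⟨le_refl _, le_refl _⟩
    · rcases le_or_gt c x1 with h1c | h1c
      · exact main x1 x2 h1c h12
      · have e1 := heqc x1 h1c.le
        rw [e1.1, e1.2]
        exact main c x2 (le_refl c) h2c.le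
  have hpos : Monotone (posPartFun f c e) := fun x1 x2 h => (hposneg x1 x2 h).1
  have hneg : Monotone (negPartFun f c e) := fun x1 x2 h => (hposneg x1 x2 h).2
  -- the comparison step functions
  set n1 : ℝ → ℝ := fun x => ∑ i, stepR (max (-(a i)) 0) (p i) x with hn1def
  set n2 : ℝ → ℝ := fun x => ∑ i, stepR (max (a i) 0) (p i) x with hn2def
  have hn1 : Monotone n1 := monotone_finsum _ _
    (fun i _ => stepR_mono (le_max_right _ 0))
  have hn2 : Monotone n2 := monotone_finsum _ _
    (fun i _ => stepR_mono (le_max_right _ 0))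
  have hstepsub : ∀ (i : Fin n) (x : ℝ),
      stepR (max (-(a i)) 0) (p i) x - stepR (max (a i) 0) (p i) x
        = stepR (-(a i)) (p i) x := by
    intro i x
    unfold stepR
    split_ifs with h
    · exact max_sub_max (a i)
    · ring
  have key2 : (fun x => posPartFun f c e x + n2 x)
      = fun x => negPartFun f c e x + n1 x := by
    funext x
    have h1 : posPartFun f c e x - negPartFun f c e x = clampOn f c e x - f c := by
      rw [posPartFun, negPartFun]; ring
    have h2 : n1 x - n2 x = clampOn f c e x - f c := by
      rw [hn1def, hn2def, hg' x]
      simp only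
      rw [← Finset.sum_sub_distrib]
      rw [Finset.sum_congr rfl fun i _ => hstepsub i x]
      ring
    linarith
  -- measures
  have hμ : monoMeasure (posPartFun f c e) + monoMeasure n2
      = monoMeasure (negPartFun f c e) + monoMeasure n1 := by
    rw [← monoMeasure_add hpos hn2, ← monoMeasure_add hneg hn1, key2]
  have hMn1 : monoMeasure n1
      = ∑ i, ENNReal.ofReal (max (-(a i)) 0) • Measure.dirac (p i) := by
    rw [hn1def, monoMeasure_sum Finset.univ _ (fun i _ => stepR_mono (le_max_right _ 0))]
    exact Finset.sum_congr rfl fun i _ => monoMeasure_stepR (p i) (le_max_right _ 0)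
  have hMn2 : monoMeasure n2
      = ∑ i, ENNReal.ofReal (max (a i) 0) • Measure.dirac (p i) := by
    rw [hn2def, monoMeasure_sum Finset.univ _ (fun i _ => stepR_mono (le_max_right _ 0))]
    exact Finset.sum_congr rfl fun i _ => monoMeasure_stepR (p i) (le_max_right _ 0)
  -- finiteness of all four measures on `Ico c e`
  have hfin_mono : ∀ (m : ℝ → ℝ) (hm : Monotone m), monoMeasure m (Ico c e) ≠ ⊤ := by
    intro m hm
    have hsub : Ico c e ⊆ Ioc (c - 1) e := fun x hx => ⟨by linarith [hx.1], hx.2.le⟩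
    refine ne_top_of_le_ne_top ?_ (measure_mono hsub)
    rw [monoMeasure_eq hm, StieltjesFunction.measure_Ioc]
    exact ENNReal.ofReal_ne_top
  have hfin_dirsum : ∀ (r : Fin n → ℝ),
      (∑ i, ENNReal.ofReal (r i) • Measure.dirac (p i)) (Ico c e) ≠ ⊤ := by
    intro r
    rw [Measure.finset_sum_apply]
    refine (ENNReal.sum_lt_top.2 fun i _ => ?_).ne
    rw [Measure.smul_apply, smul_eq_mul]
    calc ENNReal.ofReal (r i) * Measure.dirac (p i) (Ico c e)
        ≤ ENNReal.ofReal (r i) * 1 := mul_le_mul_right prob_le_one _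
      _ < ⊤ := by rw [mul_one]; exact ENNReal.ofReal_lt_top
  -- integrability
  have Ipos : Integrable φ ((monoMeasure (posPartFun f c e)).restrict (Ico c e)) :=
    integrable_restrict_of_bound _ (hfin_mono _ hpos) hφ
  have Ineg : Integrable φ ((monoMeasure (negPartFun f c e)).restrict (Ico c e)) :=
    integrable_restrict_of_bound _ (hfin_mono _ hneg) hφ
  have In1 : Integrable φ ((monoMeasure n1).restrict (Ico c e)) := by
    refine integrable_restrict_of_bound _ ?_ hφ
    rw [hMn1]; exact hfin_dirsum _
  have In2 : Integrable φ ((monoMeasure n2).restrict (Ico c e)) := by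
    refine integrable_restrict_of_bound _ ?_ hφ
    rw [hMn2]; exact hfin_dirsum _
  -- the exchange identity
  have hsum1 : (∫ x in Ico c e, φ x ∂(monoMeasure (posPartFun f c e)))
      + (∫ x in Ico c e, φ x ∂(monoMeasure n2))
      = (∫ x in Ico c e, φ x ∂(monoMeasure (negPartFun f c e)))
      + (∫ x in Ico c e, φ x ∂(monoMeasure n1)) := by
    rw [← integral_add_measure Ipos In2, ← integral_add_measure Ineg In1,
      ← Measure.restrict_add, ← Measure.restrict_add, hμ]
  -- dirac sum integrals
  have hdir : ∀ (r : Fin n → ℝ) (hr : ∀ i, 0 ≤ r i),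
      (∫ x in Ico c e, φ x ∂(∑ i, ENNReal.ofReal (r i) • Measure.dirac (p i)))
      = ∑ i, r i * φ (p i) := by
    intro r hr
    rw [restrict_finsum]
    rw [integral_finset_sum_measure (fun i _ => by
      refine integrable_restrict_of_bound _ ?_ hφ
      rw [Measure.smul_apply, smul_eq_mul]
      exact (ENNReal.mul_lt_top ENNReal.ofReal_lt_top
        (lt_of_le_of_lt prob_le_one (by norm_num : (1:ℝ≥0∞) < ⊤))).ne)]
    refine Finset.sum_congr rfl fun i _ => ?_
    rw [Measure.restrict_smul, integral_smul_measure,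
      MeasureTheory.restrict_dirac' measurableSet_Ico, if_pos (hp i), integral_dirac,
      ENNReal.toReal_ofReal (hr i), smul_eq_mul]
  have hIn1 : (∫ x in Ico c e, φ x ∂(monoMeasure n1)) = ∑ i, max (-(a i)) 0 * φ (p i) := by
    rw [hMn1]; exact hdir _ (fun i => le_max_right _ 0)
  have hIn2 : (∫ x in Ico c e, φ x ∂(monoMeasure n2)) = ∑ i, max (a i) 0 * φ (p i) := by
    rw [hMn2]; exact hdir _ (fun i => le_max_right _ 0)
  -- conclusion
  rw [lsIntIcoR]
  have : (∫ x in Ico c e, φ x ∂(monoMeasure (posPartFun f c e)))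
      - (∫ x in Ico c e, φ x ∂(monoMeasure (negPartFun f c e)))
      = (∫ x in Ico c e, φ x ∂(monoMeasure n1)) - (∫ x in Ico c e, φ x ∂(monoMeasure n2)) := by
    linarith
  rw [this, hIn1, hIn2, ← Finset.sum_sub_distrib]
  refine Finset.sum_congr rfl fun i _ => ?_
  rw [← sub_mul, max_sub_max]

/-- A finite step-function representation of `f` on `[c,e]`, with jumps in `[c,e)`. -/
def HasRep (f : ℝ → ℂ) (c e : ℝ) : Prop :=
  ∃ (n : ℕ) (p : Fin n → ℝ) (a : Fin n → ℂ) (b : ℂ),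
    (∀ i, p i ∈ Ico c e) ∧
    ∀ x ∈ Icc c e, f x = b + ∑ i, a i * (if x ≤ p i then 1 else 0)

theorem lsIntIcoC_eval {n : ℕ} {c e : ℝ} (hce : c < e) (p : Fin n → ℝ) (a : Fin n → ℂ) (b : ℂ)
    (hp : ∀ i, p i ∈ Ico c e) (f φ : ℝ → ℂ)
    (hf : ∀ x ∈ Icc c e, f x = b + ∑ i, a i * (if x ≤ p i then 1 else 0))
    (hφ : ContinuousOn φ (Icc c e)) :
    lsIntIcoC f c e φ = ∑ i, (-(a i)) * φ (p i) := by
  have hre : ∀ x ∈ Icc c e,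
      (f x).re = b.re + ∑ i, (a i).re * (if x ≤ p i then 1 else 0) := by
    intro x hx
    rw [hf x hx, Complex.add_re, Complex.re_sum]
    congr 1
    refine Finset.sum_congr rfl fun i _ => ?_
    split_ifs <;> simp
  have him : ∀ x ∈ Icc c e,
      (f x).im = b.im + ∑ i, (a i).im * (if x ≤ p i then 1 else 0) := by
    intro x hx
    rw [hf x hx, Complex.add_im, Complex.im_sum]
    congr 1
    refine Finset.sum_congr rfl fun i _ => ?_
    split_ifs <;> simp
  have hφre : ContinuousOn (fun x => (φ x).re) (Icc c e) :=
    Complex.continuous_re.comp_continuousOn hφ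
  have hφim : ContinuousOn (fun x => (φ x).im) (Icc c e) :=
    Complex.continuous_im.comp_continuousOn hφ
  rw [lsIntIcoC,
    lsIntIcoR_eval hce p (fun i => (a i).re) b.re hp _ _ hre hφre,
    lsIntIcoR_eval hce p (fun i => (a i).im) b.im hp _ _ him hφim,
    lsIntIcoR_eval hce p (fun i => (a i).re) b.re hp _ _ hre hφim,
    lsIntIcoR_eval hce p (fun i => (a i).im) b.im hp _ _ him hφre]
  apply Complex.ext
  · simp only [Complex.add_re, Complex.sub_re, Complex.ofReal_re, Complex.mul_re,
      Complex.I_re, Complex.I_im, Complex.add_im, Complex.ofReal_im, Complex.re_sum,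
      zero_mul, one_mul, zero_sub, sub_zero, add_zero, zero_add]
    rw [← Finset.sum_sub_distrib]
    refine Finset.sum_congr rfl fun i _ => ?_
    simp [Complex.mul_re]
  · simp only [Complex.add_im, Complex.sub_im, Complex.ofReal_im, Complex.mul_im,
      Complex.I_re, Complex.I_im, Complex.add_re, Complex.ofReal_re, Complex.im_sum,
      zero_mul, one_mul, add_zero, zero_add, sub_zero]
    rw [← Finset.sum_add_distrib]
    refine Finset.sum_congr rfl fun i _ => ?_
    simp [Complex.mul_im]

lemma lsIntIcoC_const {c e : ℝ} (hce : c < e) (z : ℂ) {φ : ℝ → ℂ}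
    (hφ : ContinuousOn φ (Icc c e)) : lsIntIcoC (fun _ => z) c e φ = 0 := by
  rw [lsIntIcoC_eval hce (fun i : Fin 0 => c) (fun i : Fin 0 => 0) z
    (fun i => i.elim0) _ φ (fun x hx => by simp) hφ]
  simp

lemma hasRep_const {c e : ℝ} (z : ℂ) : HasRep (fun _ => z) c e :=
  ⟨0, fun i => i.elim0, fun i => i.elim0, z, fun i => i.elim0, fun x _ => by simp⟩

lemma hasRep_of_eqOn {c e : ℝ} {f g : ℝ → ℂ} (h : ∀ x ∈ Icc c e, f x = g x)
    (hg : HasRep g c e) : HasRep f c e := by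
  obtain ⟨n, p, a, b, hp, hrep⟩ := hg
  exact ⟨n, p, a, b, hp, fun x hx => (h x hx).trans (hrep x hx)⟩

lemma hasRep_add {c e : ℝ} {f g : ℝ → ℂ} (hf : HasRep f c e) (hg : HasRep g c e) :
    HasRep (fun x => f x + g x) c e := by
  obtain ⟨n1, p1, a1, b1, hp1, h1⟩ := hf
  obtain ⟨n2, p2, a2, b2, hp2, h2⟩ := hg
  refine ⟨n1 + n2, Fin.append p1 p2, Fin.append a1 a2, b1 + b2, ?_, ?_⟩
  · intro i
    refine Fin.addCases (fun j => ?_) (fun j => ?_) i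
    · rw [Fin.append_left]; exact hp1 j
    · rw [Fin.append_right]; exact hp2 j
  · intro x hx
    dsimp only
    rw [h1 x hx, h2 x hx, Fin.sum_univ_add]
    simp only [Fin.append_left, Fin.append_right]
    ring

lemma lsIntIcoC_add {c e : ℝ} (hce : c < e) {f g : ℝ → ℂ} (hf : HasRep f c e)
    (hg : HasRep g c e) {φ : ℝ → ℂ} (hφ : ContinuousOn φ (Icc c e)) :
    lsIntIcoC (fun x => f x + g x) c e φ = lsIntIcoC f c e φ + lsIntIcoC g c e φ := by
  obtain ⟨n1, p1, a1, b1, hp1, h1⟩ := hf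
  obtain ⟨n2, p2, a2, b2, hp2, h2⟩ := hg
  have hpapp : ∀ i : Fin (n1 + n2), Fin.append p1 p2 i ∈ Ico c e := by
    intro i
    refine Fin.addCases (fun j => ?_) (fun j => ?_) i
    · rw [Fin.append_left]; exact hp1 j
    · rw [Fin.append_right]; exact hp2 j
  rw [lsIntIcoC_eval hce p1 a1 b1 hp1 f φ h1 hφ,
    lsIntIcoC_eval hce p2 a2 b2 hp2 g φ h2 hφ,
    lsIntIcoC_eval hce (Fin.append p1 p2) (Fin.append a1 a2) (b1 + b2) hpapp _ φ
      (fun x hx => by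
        rw [h1 x hx, h2 x hx, Fin.sum_univ_add]
        simp only [Fin.append_left, Fin.append_right]
        ring) hφ,
    Fin.sum_univ_add]
  simp only [Fin.append_left, Fin.append_right]

lemma hasRep_smul {c e : ℝ} {f : ℝ → ℂ} (z : ℂ) (hf : HasRep f c e) :
    HasRep (fun x => z * f x) c e := by
  obtain ⟨n, p, a, b, hp, h⟩ := hf
  refine ⟨n, p, fun i => z * a i, z * b, hp, fun x hx => ?_⟩
  dsimp only
  rw [h x hx, mul_add, Finset.mul_sum]
  congr 1
  exact Finset.sum_congr rfl fun i _ => by ring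

lemma lsIntIcoC_smul {c e : ℝ} (hce : c < e) {f : ℝ → ℂ} (z : ℂ) (hf : HasRep f c e)
    {φ : ℝ → ℂ} (hφ : ContinuousOn φ (Icc c e)) :
    lsIntIcoC (fun x => z * f x) c e φ = z * lsIntIcoC f c e φ := by
  obtain ⟨n, p, a, b, hp, h⟩ := hf
  rw [lsIntIcoC_eval hce p a b hp f φ h hφ,
    lsIntIcoC_eval hce p (fun i => z * a i) (z * b) hp _ φ
      (fun x hx => by
        rw [h x hx, mul_add, Finset.mul_sum]
        congr 1
        exact Finset.sum_congr rfl fun i _ => by ring) hφ,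
    Finset.mul_sum]
  exact Finset.sum_congr rfl fun i _ => by ring

lemma hasRep_finsum {c e : ℝ} {ι : Type*} (K : Finset ι) (F : ι → ℝ → ℂ)
    (h : ∀ l ∈ K, HasRep (F l) c e) : HasRep (fun x => ∑ l ∈ K, F l x) c e := by
  classical
  induction K using Finset.induction_on with
  | empty => simpa using hasRep_const (c := c) (e := e) 0
  | @insert l K' hnot ih =>
    have : (fun x => ∑ i ∈ insert l K', F i x)
        = fun x => F l x + ∑ i ∈ K', F i x := by
      funext x; rw [Finset.sum_insert hnot]
    rw [this]
    exact hasRep_add (h l (Finset.mem_insert_self l K'))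
      (ih fun i hi => h i (Finset.mem_insert_of_mem hi))

lemma lsIntIcoC_finsum {c e : ℝ} (hce : c < e) {ι : Type*} (K : Finset ι) (F : ι → ℝ → ℂ)
    (h : ∀ l ∈ K, HasRep (F l) c e) {φ : ℝ → ℂ} (hφ : ContinuousOn φ (Icc c e)) :
    lsIntIcoC (fun x => ∑ l ∈ K, F l x) c e φ = ∑ l ∈ K, lsIntIcoC (F l) c e φ := by
  classical
  induction K using Finset.induction_on with
  | empty => simpa using lsIntIcoC_const hce 0 hφ
  | @insert l K' hnot ih =>
    have hfun : (fun x => ∑ i ∈ insert l K', F i x)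
        = fun x => F l x + ∑ i ∈ K', F i x := by
      funext x; rw [Finset.sum_insert hnot]
    rw [hfun, Finset.sum_insert hnot,
      lsIntIcoC_add hce (h l (Finset.mem_insert_self l K'))
        (hasRep_finsum K' F fun i hi => h i (Finset.mem_insert_of_mem hi)) hφ,
      ih fun i hi => h i (Finset.mem_insert_of_mem hi)]

lemma lsIntIcoMV_apply {d : ℕ} (F : ℝ → Matrix (Fin d) (Fin d) ℂ) (c e : ℝ)
    (g : ℝ → Fin d → ℂ) (i : Fin d) :
    lsIntIcoMV F c e g i = ∑ k, lsIntIcoC (fun τ => F τ i k) c e (fun τ => g τ k) := rfl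

lemma mulVec_apply' {d : ℕ} (A : Matrix (Fin d) (Fin d) ℂ) (v : Fin d → ℂ) (i : Fin d) :
    A.mulVec v i = ∑ m, A i m * v m := rfl


end StieltjesHelpers

/-- **Representation formula (Theorem 1.1).**

For every `s ∈ ℝ` and every `φ ∈ C_s`, the unique continuous solution
`y : [s - τ_N, ∞) → ℂ^d` of the difference-delay system satisfies, for all `t ≥ s`,
`y t = - ∑_{j} ∫_{[s, s+τ_j)} d_α X(t,α) (D_j(α) φ(α - τ_j - s))`,
where the integrals are Lebesgue–Stieltjes integrals over `[s, s+τ_j)` against the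
matrix-valued measure associated with the restriction of `α ↦ X(t,α)` to `[s, s+τ_j)`. -/
theorem representation_formula
    (d N : ℕ) (hd : 0 < d)
    (τ : Fin (N + 1) → ℝ) (hτpos : ∀ j, 0 < τ j) (hτmono : StrictMono τ)
    (D : Fin (N + 1) → ℝ → Matrix (Fin d) (Fin d) ℂ) (hD : ∀ j, Continuous (D j))
    -- the fundamental solution
    (X : ℝ → ℝ → Matrix (Fin d) (Fin d) ℂ)
    (hX0 : ∀ t α : ℝ, t < α → X t α = 0)
    (hXrec : ∀ t α : ℝ, α ≤ t → X t α = 1 + ∑ j, D j t * X (t - τ j) α)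
    -- the initial time and data
    (s : ℝ) (φ : ℝ → Fin d → ℂ)
    (hφcont : ContinuousOn φ (Icc (-(τ (Fin.last N))) 0))
    (hφcompat : φ 0 = ∑ j, (D j s).mulVec (φ (-(τ j))))
    -- the continuous solution
    (y : ℝ → Fin d → ℂ)
    (hycont : ContinuousOn y (Ici (s - τ (Fin.last N))))
    (hy0 : ∀ θ ∈ Icc (-(τ (Fin.last N))) 0, y (s + θ) = φ θ)
    (hy : ∀ t, s < t → y t = ∑ j, (D j t).mulVec (y (t - τ j))) :
    ∀ t : ℝ, s ≤ t →
      y t = -∑ j, lsIntIcoMV (X t) s (s + τ j)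
        (fun α => (D j α).mulVec (φ (α - τ j - s))) := by
  classical
  have hτ0 : 0 < τ 0 := hτpos 0
  have hτle : ∀ j, τ 0 ≤ τ j := fun j => hτmono.monotone (Fin.zero_le j)
  have hτlast : ∀ j, τ j ≤ τ (Fin.last N) := fun j => hτmono.monotone (Fin.le_last j)
  -- global decomposition of X
  have hXdec : ∀ t α : ℝ, X t α
      = (if α ≤ t then (1 : Matrix (Fin d) (Fin d) ℂ) else 0) + ∑ j, D j t * X (t - τ j) α := by
    intro t α
    rcases le_or_gt α t with h | h
    · rw [if_pos h]; exact hXrec t α h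
    · rw [if_neg (not_le.2 h), hX0 t α h]
      have h0 : ∀ j : Fin (N+1), X (t - τ j) α = 0 :=
        fun j => hX0 _ _ (by linarith [hτpos j])
      rw [Finset.sum_congr rfl fun j _ => by rw [h0 j, mul_zero]]
      simp
  -- continuity of the integrands
  have hgcont : ∀ (j : Fin (N+1)) (k : Fin d),
      ContinuousOn (fun α => ((D j α).mulVec (φ (α - τ j - s))) k) (Icc s (s + τ j)) := by
    intro j k
    have hmap : MapsTo (fun α => α - τ j - s) (Icc s (s + τ j))
        (Icc (-(τ (Fin.last N))) 0) := by
      intro α hα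
      dsimp only
      exact ⟨by linarith [hα.1, hτlast j], by linarith [hα.2]⟩
    have hφm : ∀ m : Fin d, ContinuousOn (fun α => φ (α - τ j - s) m) (Icc s (s + τ j)) := by
      intro m
      exact (((continuous_apply m).comp_continuousOn hφcont).comp
        ((continuous_id.sub continuous_const).sub continuous_const).continuousOn hmap)
    have : (fun α => ((D j α).mulVec (φ (α - τ j - s))) k)
        = fun α => ∑ m, D j α k m * φ (α - τ j - s) m := rfl
    rw [this]
    refine continuousOn_finset_sum _ fun m _ => ?_
    exact (((hD j).matrix_elem k m).continuousOn).mul (hφm m)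
  -- step representation of H-entries
  have hHrep : ∀ (u : ℝ) (i k : Fin d) (e : ℝ), s < e →
      HasRep (fun α => if α ≤ u then (1 : Matrix (Fin d) (Fin d) ℂ) i k else 0) s e := by
    intro u i k e hse
    rcases lt_or_ge u s with h | h
    · refine hasRep_of_eqOn (g := fun _ => 0) (fun x hx => ?_) (hasRep_const 0)
      rw [if_neg (by intro h'; exact absurd (lt_of_lt_of_le h hx.1) (not_lt.2 h'))]
    · rcases lt_or_ge u e with h2 | h2
      · refine ⟨1, fun _ => u, fun _ => (1 : Matrix (Fin d) (Fin d) ℂ) i k, 0,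
          fun _ => ⟨h, h2⟩, fun x hx => ?_⟩
        dsimp only
        rw [Fin.sum_univ_one]
        by_cases hxu : x ≤ u
        · rw [if_pos hxu, if_pos hxu, mul_one, zero_add]
        · rw [if_neg hxu, if_neg hxu, mul_zero, zero_add]
      · refine hasRep_of_eqOn (g := fun _ => (1 : Matrix (Fin d) (Fin d) ℂ) i k)
          (fun x hx => ?_) (hasRep_const _)
        rw [if_pos (hx.2.trans h2)]
  -- value of the H-entry integrals
  have hHval : ∀ (u : ℝ), s ≤ u → ∀ (i k : Fin d) (e : ℝ) (hse : s < e)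
      (φk : ℝ → ℂ) (hφk : ContinuousOn φk (Icc s e)),
      lsIntIcoC (fun α => if α ≤ u then (1 : Matrix (Fin d) (Fin d) ℂ) i k else 0) s e φk
        = if u < e then -((1 : Matrix (Fin d) (Fin d) ℂ) i k * φk u) else 0 := by
    intro u hsu i k e hse φk hφk
    rcases lt_or_ge u e with h2 | h2
    · rw [if_pos h2]
      rw [lsIntIcoC_eval hse (fun _ : Fin 1 => u)
        (fun _ : Fin 1 => (1 : Matrix (Fin d) (Fin d) ℂ) i k) 0
        (fun _ => ⟨hsu, h2⟩) _ φk (fun x hx => by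
          rw [Fin.sum_univ_one]
          by_cases hxu : x ≤ u
          · rw [if_pos hxu, if_pos hxu, mul_one, zero_add]
          · rw [if_neg hxu, if_neg hxu, mul_zero, zero_add]) hφk]
      rw [Fin.sum_univ_one, neg_mul]
    · rw [if_neg (not_lt.2 h2)]
      rw [lsIntIcoC_eval hse (fun i : Fin 0 => i.elim0) (fun i : Fin 0 => i.elim0)
        ((1 : Matrix (Fin d) (Fin d) ℂ) i k)
        (fun i => i.elim0) _ φk (fun x hx => by
          rw [if_pos (hx.2.trans h2)]
          simp) hφk]
      simp
  -- step representations of the entries of X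
  have hXrepAux : ∀ (n : ℕ) (u : ℝ), u < s + n * τ 0 → ∀ (i k : Fin d) (e : ℝ), s < e →
      HasRep (fun α => X u α i k) s e := by
    intro n
    induction n with
    | zero =>
      intro u hu i k e hse
      simp only [Nat.cast_zero, zero_mul, add_zero] at hu
      refine hasRep_of_eqOn (g := fun _ => 0) (fun x hx => ?_) (hasRep_const 0)
      rw [hX0 u x (lt_of_lt_of_le hu hx.1), Matrix.zero_apply]
    | succ n ih =>
      intro u hu i k e hse
      rcases lt_or_ge u s with h | h
      · refine hasRep_of_eqOn (g := fun _ => 0) (fun x hx => ?_) (hasRep_const 0)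
        rw [hX0 u x (lt_of_lt_of_le h hx.1), Matrix.zero_apply]
      · have hu' : ∀ j : Fin (N+1), u - τ j < s + n * τ 0 := by
          intro j
          push_cast at hu
          have := hτle j
          linarith
        have hfun : (fun α => X u α i k)
            = fun α => (if α ≤ u then (1 : Matrix (Fin d) (Fin d) ℂ) i k else 0)
                + ∑ j', ∑ m, (D j' u) i m * X (u - τ j') α m k := by
          funext α
          conv_lhs => rw [hXdec u α]
          rw [Matrix.add_apply, Matrix.sum_apply]
          refine congrArg₂ (· + ·) ?_ (Finset.sum_congr rfl fun j' _ => Matrix.mul_apply)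
          by_cases hα : α ≤ u <;> simp [hα]
        rw [hfun]
        exact hasRep_add (hHrep u i k e hse)
          (hasRep_finsum Finset.univ _ fun j' _ =>
            hasRep_finsum Finset.univ _ fun m _ =>
              hasRep_smul _ (ih (u - τ j') (hu' j') m k e hse))
  have hXrep' : ∀ (u : ℝ) (i k : Fin d) (e : ℝ), s < e →
      HasRep (fun α => X u α i k) s e := by
    intro u i k e hse
    obtain ⟨n, hn⟩ := exists_nat_gt ((u - s) / τ 0)
    refine hXrepAux n u ?_ i k e hse
    rw [div_lt_iff₀ hτ0] at hn
    linarith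
  -- vanishing of the integrals for `u < s`
  have hR0 : ∀ (v : ℝ), v < s → ∀ (j : Fin (N+1)) (i : Fin d),
      lsIntIcoMV (X v) s (s + τ j) (fun α => (D j α).mulVec (φ (α - τ j - s))) i = 0 := by
    intro v hv j i
    rw [lsIntIcoMV_apply]
    refine Finset.sum_eq_zero fun k _ => ?_
    have hse : s < s + τ j := by linarith [hτpos j]
    rw [lsIntIcoC_eval hse (fun i : Fin 0 => i.elim0) (fun i : Fin 0 => i.elim0) 0
      (fun i => i.elim0) _ _ (fun x hx => by
        rw [hX0 v x (lt_of_lt_of_le hv hx.1), Matrix.zero_apply]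
        simp) (hgcont j k)]
    simp
  -- the solution recursion including the initial time
  have hyφ : ∀ u : ℝ, s ≤ u → ∀ j : Fin (N+1), u - τ j ≤ s →
      y (u - τ j) = φ (u - τ j - s) := by
    intro u hu j hus
    have hmem : u - τ j - s ∈ Icc (-(τ (Fin.last N))) 0 :=
      ⟨by linarith [hτlast j], by linarith⟩
    have := hy0 _ hmem
    rw [show s + (u - τ j - s) = u - τ j by ring] at this
    exact this
  have hyrec : ∀ u : ℝ, s ≤ u → y u = ∑ j, (D j u).mulVec (y (u - τ j)) := by
    intro u hu
    rcases lt_or_eq_of_le hu with h | h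
    · exact hy u h
    · have h1 : y u = φ 0 := by
        have h0 := hy0 0 ⟨by linarith [hτpos (Fin.last N)], le_refl 0⟩
        rw [add_zero, h] at h0
        exact h0
      have h2 : ∀ j : Fin (N+1), y (s - τ j) = φ (-(τ j)) := by
        intro j
        have h3 := hy0 (-(τ j)) ⟨neg_le_neg (hτlast j), by linarith [hτpos j]⟩
        rw [show s + -(τ j) = s - τ j by ring] at h3
        exact h3
      rw [h1, hφcompat, ← h]
      exact Finset.sum_congr rfl fun j _ => by rw [h2 j]
  -- main induction
  have main : ∀ (n : ℕ) (u : ℝ), s ≤ u → u < s + n * τ 0 →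
      y u = -∑ j, lsIntIcoMV (X u) s (s + τ j)
        (fun α => (D j α).mulVec (φ (α - τ j - s))) := by
    intro n
    induction n with
    | zero =>
      intro u hu hlt
      simp only [Nat.cast_zero, zero_mul, add_zero] at hlt
      exact absurd hu (not_le.2 hlt)
    | succ n ih =>
      intro u hu hlt
      have hlt' : ∀ j : Fin (N+1), u - τ j < s + n * τ 0 := by
        intro j
        push_cast at hlt
        have := hτle j
        linarith
      -- decomposition of each integral
      have hdecomp : ∀ (j : Fin (N+1)) (i : Fin d),
          lsIntIcoMV (X u) s (s + τ j) (fun α => (D j α).mulVec (φ (α - τ j - s))) i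
            = (if u < s + τ j then -(((D j u).mulVec (φ (u - τ j - s))) i) else 0)
              + ∑ j', ∑ m, (D j' u) i m *
                  lsIntIcoMV (X (u - τ j')) s (s + τ j)
                    (fun α => (D j α).mulVec (φ (α - τ j - s))) m := by
        intro j i
        have hse : s < s + τ j := by linarith [hτpos j]
        have hfun : ∀ k : Fin d, (fun α => X u α i k)
            = fun α => (if α ≤ u then (1 : Matrix (Fin d) (Fin d) ℂ) i k else 0)
                + ∑ j', ∑ m, (D j' u) i m * X (u - τ j') α m k := by
          intro k
          funext α
          conv_lhs => rw [hXdec u α]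
          rw [Matrix.add_apply, Matrix.sum_apply]
          refine congrArg₂ (· + ·) ?_ (Finset.sum_congr rfl fun j' _ => Matrix.mul_apply)
          by_cases hα : α ≤ u <;> simp [hα]
        rw [lsIntIcoMV_apply]
        have hstep : ∀ k : Fin d,
            lsIntIcoC (fun α => X u α i k) s (s + τ j)
                (fun α => ((D j α).mulVec (φ (α - τ j - s))) k)
              = (if u < s + τ j then
                    -((1 : Matrix (Fin d) (Fin d) ℂ) i k
                      * ((D j u).mulVec (φ (u - τ j - s))) k) else 0)
                + ∑ j', ∑ m, (D j' u) i m *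
                    lsIntIcoC (fun α => X (u - τ j') α m k) s (s + τ j)
                      (fun α => ((D j α).mulVec (φ (α - τ j - s))) k) := by
          intro k
          rw [hfun k]
          rw [lsIntIcoC_add hse (hHrep u i k _ hse)
            (hasRep_finsum Finset.univ _ fun j' _ =>
              hasRep_finsum Finset.univ _ fun m _ =>
                hasRep_smul _ (hXrep' (u - τ j') m k _ hse)) (hgcont j k)]
          rw [hHval u hu i k _ hse _ (hgcont j k)]
          congr 1
          rw [lsIntIcoC_finsum hse _ _ (fun j' _ =>
            hasRep_finsum Finset.univ _ fun m _ =>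
              hasRep_smul _ (hXrep' (u - τ j') m k _ hse)) (hgcont j k)]
          refine Finset.sum_congr rfl fun j' _ => ?_
          rw [lsIntIcoC_finsum hse _ _ (fun m _ =>
            hasRep_smul _ (hXrep' (u - τ j') m k _ hse)) (hgcont j k)]
          refine Finset.sum_congr rfl fun m _ => ?_
          rw [lsIntIcoC_smul hse _ (hXrep' (u - τ j') m k _ hse) (hgcont j k)]
        rw [Finset.sum_congr rfl fun k _ => hstep k, Finset.sum_add_distrib]
        congr 1
        · -- the H part sums to the ite term
          by_cases hcase : u < s + τ j
          · simp only [if_pos hcase]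
            have hone : ∀ k : Fin d, -((1 : Matrix (Fin d) (Fin d) ℂ) i k
                * ((D j u).mulVec (φ (u - τ j - s))) k)
                = if i = k then -(((D j u).mulVec (φ (u - τ j - s))) k) else 0 := by
              intro k
              rw [Matrix.one_apply]
              split_ifs <;> simp
            rw [Finset.sum_congr rfl fun k _ => hone k, Finset.sum_ite_eq]
            simp
          · simp only [if_neg hcase]
            exact (Finset.sum_eq_zero fun k _ => rfl)
        · -- the recursive part
          rw [Finset.sum_comm]
          refine Finset.sum_congr rfl fun j' _ => ?_
          rw [Finset.sum_comm]
          refine Finset.sum_congr rfl fun m _ => ?_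
          rw [lsIntIcoMV_apply, Finset.mul_sum]
      -- assemble
      funext i
      have expand : (-∑ j, lsIntIcoMV (X u) s (s + τ j)
          (fun α => (D j α).mulVec (φ (α - τ j - s)))) i
          = -∑ j, lsIntIcoMV (X u) s (s + τ j)
              (fun α => (D j α).mulVec (φ (α - τ j - s))) i := by
        rw [Pi.neg_apply, Finset.sum_apply]
      rw [expand, Finset.sum_congr rfl fun j _ => hdecomp j i, Finset.sum_add_distrib]
      -- swap the double sum
      have hswap : (∑ j, ∑ j', ∑ m, (D j' u) i m *
              lsIntIcoMV (X (u - τ j')) s (s + τ j)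
                (fun α => (D j α).mulVec (φ (α - τ j - s))) m)
          = ∑ j', ∑ m, (D j' u) i m *
              (∑ j, lsIntIcoMV (X (u - τ j')) s (s + τ j)
                (fun α => (D j α).mulVec (φ (α - τ j - s))) m) := by
        rw [Finset.sum_comm]
        refine Finset.sum_congr rfl fun j' _ => ?_
        rw [Finset.sum_comm]
        refine Finset.sum_congr rfl fun m _ => ?_
        rw [Finset.mul_sum]
      have hSval : ∀ (j' : Fin (N+1)) (m : Fin d),
          (∑ j, lsIntIcoMV (X (u - τ j')) s (s + τ j)
              (fun α => (D j α).mulVec (φ (α - τ j - s))) m)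
            = if s ≤ u - τ j' then -(y (u - τ j') m) else 0 := by
        intro j' m
        by_cases hc : s ≤ u - τ j'
        · rw [if_pos hc]
          have hm := congrFun (ih (u - τ j') hc (hlt' j')) m
          rw [Pi.neg_apply, Finset.sum_apply] at hm
          linear_combination hm
        · rw [if_neg hc]
          push_neg at hc
          exact Finset.sum_eq_zero fun j _ => hR0 _ hc j m
      rw [hswap, Finset.sum_congr rfl fun j' _ => Finset.sum_congr rfl fun m _ => by
        rw [hSval j' m]]
      have hterm2 : ∀ j' : Fin (N+1),
          (∑ m, (D j' u) i m * (if s ≤ u - τ j' then -(y (u - τ j') m) else 0))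
            = if s ≤ u - τ j' then ∑ m, (D j' u) i m * (-(y (u - τ j') m)) else 0 := by
        intro j'
        by_cases hc : s ≤ u - τ j'
        · simp only [if_pos hc]
        · simp only [if_neg hc, mul_zero, Finset.sum_const_zero]
      rw [Finset.sum_congr rfl fun j' _ => hterm2 j']
      -- now compare with the recursion for y
      rw [hyrec u hu, Finset.sum_apply]
      rw [neg_add, ← Finset.sum_neg_distrib, ← Finset.sum_neg_distrib,
        ← Finset.sum_add_distrib]
      refine Finset.sum_congr rfl fun j _ => ?_
      rw [mulVec_apply']
      rcases le_or_gt s (u - τ j) with hc | hc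
      · rw [if_neg (by intro h'; exact absurd hc (not_le.2 (by linarith))),
          if_pos hc, neg_zero, zero_add, ← Finset.sum_neg_distrib]
        refine Finset.sum_congr rfl fun m _ => by ring
      · rw [if_pos (by linarith), if_neg (not_le.2 hc), neg_zero, add_zero, neg_neg,
          hyφ u hu j hc.le, mulVec_apply']
  intro t ht
  obtain ⟨n, hn⟩ := exists_nat_gt ((t - s) / τ 0)
  refine main n t ht ?_
  rw [div_lt_iff₀ hτ0] at hn
  linarith

end
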